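/- Every classical causal-CSIT coding scheme induces an NS-assisted causal-CSIT scheme with the same probability of success: let (N, P_S) be a channel with state and M, n ∈ ℕ. Given a classical coding scheme with causal CSIT (𝒬, P_Q, E, D) with message size M and blocklength n, define Z(x^n, ŵ | w, s^n, y^n) = Σ_{q∈𝒬} P_Q(q) (∏_{j=1}^n E(x_j | x^{j−1}, w, s^j, q)) D(ŵ | y^n, q). Then Z is a valid NS-assisted coding scheme with causal CSIT (Z ≥ 0, normalized, and satisfying conditions C1, C2 and C3), and η(Z) equals the probability of success of the classical scheme. Consequently, η^{NS,ca}_{opt,M,n}(N, P_S) ≥ η^{C,ca}_{opt,M,n}(N, P_S). -/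
import Mathlib


open scoped Classical BigOperators
open Finset Filter

noncomputable section

def IsPMF {S : Type*} [Fintype S] (P : S → ℝ) : Prop :=
  (∀ s, 0 ≤ P s) ∧ ∑ s, P s = 1

def IsChannel {X Y S : Type*} [Fintype Y] (N : Y → X → S → ℝ) : Prop :=
  (∀ y x s, 0 ≤ N y x s) ∧ ∀ x s, ∑ y, N y x s = 1

def IsCondPMF {X S : Type*} [Fintype X] (PXS : X → S → ℝ) : Prop :=
  (∀ x s, 0 ≤ PXS x s) ∧ ∀ s, ∑ x, PXS x s = 1

def prodP {S : Type*} (P : S → ℝ) {n : ℕ} (s : Fin n → S) : ℝ := ∏ i, P (s i)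

def prodN {X Y S : Type*} (N : Y → X → S → ℝ) {n : ℕ}
    (y : Fin n → Y) (x : Fin n → X) (s : Fin n → S) : ℝ :=
  ∏ i, N (y i) (x i) (s i)

/-- NS-assisted coding scheme with causal CSIT: nonnegativity, normalization,
and the conditions C1, C2, C3. -/
def IsNSCa {X Y S : Type*} [Fintype X] [Fintype Y] [Fintype S] (M n : ℕ)
    (Z : (Fin n → X) → Fin M → Fin M → (Fin n → S) → (Fin n → Y) → ℝ) : Prop :=
  (∀ x wh w s y, 0 ≤ Z x wh w s y) ∧
  (∀ w s y, ∑ x, ∑ wh, Z x wh w s y = 1) ∧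
  (∀ x w s y y', ∑ wh, Z x wh w s y = ∑ wh, Z x wh w s y') ∧
  (∀ wh w w' s s' y, ∑ x, Z x wh w s y = ∑ x, Z x wh w' s' y) ∧
  (∀ i : ℕ, 1 ≤ i → i < n →
    ∀ (x : Fin n → X) wh w s s' y, (∀ j : Fin n, (j : ℕ) < i → s j = s' j) →
      ∑ x' ∈ univ.filter (fun x' : Fin n → X => ∀ j : Fin n, (j : ℕ) < i → x' j = x j),
        Z x' wh w s y =
      ∑ x' ∈ univ.filter (fun x' : Fin n → X => ∀ j : Fin n, (j : ℕ) < i → x' j = x j),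
        Z x' wh w s' y)

def etaNS {X Y S : Type*} [Fintype X] [Fintype Y] [Fintype S]
    (N : Y → X → S → ℝ) (P : S → ℝ) (M n : ℕ)
    (Z : (Fin n → X) → Fin M → Fin M → (Fin n → S) → (Fin n → Y) → ℝ) : ℝ :=
  (1 / (M : ℝ)) * ∑ w, ∑ x, ∑ s, ∑ y, prodP P s * prodN N y x s * Z x w w s y

def etaNSOpt {X Y S : Type*} [Fintype X] [Fintype Y] [Fintype S]
    (N : Y → X → S → ℝ) (P : S → ℝ) (M n : ℕ) : ℝ :=
  sSup {e : ℝ | ∃ Z : (Fin n → X) → Fin M → Fin M → (Fin n → S) → (Fin n → Y) → ℝ,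
    IsNSCa M n Z ∧ etaNS N P M n Z = e}

/-- The length-`(j+1)` prefix `s^{j+1}` of a state sequence. -/
def prefixS {S : Type*} {n : ℕ} (s : Fin n → S) (j : Fin n) : Fin ((j : ℕ) + 1) → S :=
  fun k => s ⟨k, Nat.lt_of_le_of_lt (Nat.le_of_lt_succ k.isLt) j.isLt⟩

/-- A classical coding scheme with causal CSIT. -/
structure ClassicalCa (X S Y : Type*) [Fintype X] (M n : ℕ) where
  Q : Type
  fq : Fintype Q
  PQ : Q → ℝ
  E : (j : Fin n) → X → (Fin (j : ℕ) → X) → Fin M → (Fin ((j : ℕ) + 1) → S) → Q → ℝ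
  D : Fin M → (Fin n → Y) → Q → ℝ
  PQ_nonneg : ∀ q, 0 ≤ PQ q
  PQ_sum : ∑ q ∈ @Finset.univ Q fq, PQ q = 1
  E_nonneg : ∀ j xj h w sj q, 0 ≤ E j xj h w sj q
  E_sum : ∀ j h w sj q, ∑ xj, E j xj h w sj q = 1
  D_nonneg : ∀ wh y q, 0 ≤ D wh y q
  D_sum : ∀ y q, ∑ wh, D wh y q = 1

def etaC {X Y S : Type*} [Fintype X] [Fintype Y] [Fintype S]
    (N : Y → X → S → ℝ) (P : S → ℝ) (M n : ℕ) (C : ClassicalCa X S Y M n) : ℝ :=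
  (1 / (M : ℝ)) * ∑ w : Fin M, ∑ q ∈ @Finset.univ C.Q C.fq, C.PQ q *
    ∑ x : Fin n → X, ∑ s : Fin n → S, ∑ y : Fin n → Y,
      prodP P s *
      (∏ j, C.E j (x j) (fun k => x ⟨k, k.isLt.trans j.isLt⟩) w (prefixS s j) q) *
      prodN N y x s * C.D w y q

def etaCOpt {X Y S : Type*} [Fintype X] [Fintype Y] [Fintype S]
    (N : Y → X → S → ℝ) (P : S → ℝ) (M n : ℕ) : ℝ :=
  sSup {e : ℝ | ∃ C : ClassicalCa X S Y M n, etaC N P M n C = e}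

/-- Conditional mutual information I(X;Y|S) for the joint distribution
P_{XYS}(x,y,s) = P_S(s) P_{X|S}(x|s) N(y|x,s), in bits. -/
def condMI {X Y S : Type*} [Fintype X] [Fintype Y] [Fintype S]
    (N : Y → X → S → ℝ) (P : S → ℝ) (PXS : X → S → ℝ) : ℝ :=
  ∑ x, ∑ y, ∑ s,
    (P s * PXS x s * N y x s) *
      Real.logb 2 ((P s * PXS x s * N y x s) * P s /
        ((∑ y', P s * PXS x s * N y' x s) * (∑ x', P s * PXS x' s * N y x' s)))

/-- Transition function of the Z0/Z1 channel (arguments: output, input, state). -/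
def NZ (y x s : Bool) : ℝ := if x = s then (if y = x then 1 else 0) else 1 / 2

/-- The uniform state distribution of the Z0/Z1 channel. -/
def PZ (_ : Bool) : ℝ := 1 / 2

/-- The channel with CSIR associated to a channel with state. -/
def NCSIR {X Y S : Type*} (N : Y → X → S → ℝ) : (Y × S) → X → S → ℝ :=
  fun ys x s => if ys.2 = s then N ys.1 x s else 0


lemma seq_sum {X : Type*} [Fintype X] {n : ℕ}
    (f : (j : Fin n) → X → (Fin (j:ℕ) → X) → ℝ)
    (hf : ∀ j h, ∑ v, f j v h = 1) :
    ∀ (d i : ℕ), i + d = n → ∀ x : Fin n → X,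
    ∑ x' ∈ univ.filter (fun x' : Fin n → X => ∀ j : Fin n, (j:ℕ) < i → x' j = x j),
      ∏ j, f j (x' j) (fun k => x' ⟨k, k.isLt.trans j.isLt⟩)
    = ∏ j ∈ univ.filter (fun j : Fin n => (j:ℕ) < i),
        f j (x j) (fun k => x ⟨k, k.isLt.trans j.isLt⟩) := by
  intro d
  induction d with
  | zero =>
    intro i hi x
    have hi' : n ≤ i := by omega
    have h1 : (univ.filter (fun x' : Fin n → X => ∀ j : Fin n, (j:ℕ) < i → x' j = x j)) = {x} := by
      ext x'
      simp only [mem_filter, mem_univ, true_and, mem_singleton]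
      constructor
      · intro h; funext j; exact h j (Nat.lt_of_lt_of_le j.isLt hi')
      · rintro rfl; intro j _; rfl
    have h2 : (univ.filter (fun j : Fin n => (j:ℕ) < i)) = univ :=
      filter_true_of_mem fun j _ => Nat.lt_of_lt_of_le j.isLt hi'
    rw [h1, h2, sum_singleton]
  | succ d ih =>
    intro i hi x
    have hin : i < n := by omega
    set im : Fin n := ⟨i, hin⟩ with him
    rw [← Finset.sum_fiberwise
      (univ.filter (fun x' : Fin n → X => ∀ j : Fin n, (j:ℕ) < i → x' j = x j))
      (fun x' : Fin n → X => x' im)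
      (fun x' : Fin n → X => ∏ j, f j (x' j) (fun k => x' ⟨k, k.isLt.trans j.isLt⟩))]
    have hfib : ∀ v : X,
        (univ.filter (fun x' : Fin n → X => ∀ j : Fin n, (j:ℕ) < i → x' j = x j)).filter
          (fun x' => x' im = v)
        = univ.filter (fun x' : Fin n → X =>
            ∀ j : Fin n, (j:ℕ) < i + 1 → x' j = Function.update x im v j) := by
      intro v
      ext x'
      simp only [mem_filter, mem_univ, true_and]
      constructor
      · rintro ⟨h1, h2⟩ j hj
        rcases Nat.lt_succ_iff_lt_or_eq.mp hj with hj' | hj'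
        · have hne : j ≠ im := fun h => by simp [h, him] at hj'
          rw [Function.update_of_ne hne, h1 j hj']
        · have hje : j = im := Fin.ext (by simpa [him] using hj')
          subst hje
          rw [Function.update_self]; exact h2
      · intro h
        constructor
        · intro j hj
          have hne : j ≠ im := fun hh => by simp [hh, him] at hj
          have := h j (Nat.lt_succ_of_lt hj)
          rwa [Function.update_of_ne hne] at this
        · have := h im (by simp [him])
          rwa [Function.update_self] at this
    calc ∑ v : X, ∑ x' ∈ (univ.filter (fun x' : Fin n → X => ∀ j : Fin n, (j:ℕ) < i → x' j = x j)).filter (fun x' => x' im = v),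
            ∏ j, f j (x' j) (fun k => x' ⟨k, k.isLt.trans j.isLt⟩)
        = ∑ v : X, ∏ j ∈ univ.filter (fun j : Fin n => (j:ℕ) < i + 1),
            f j (Function.update x im v j)
              (fun k => Function.update x im v ⟨k, k.isLt.trans j.isLt⟩) := by
          refine Finset.sum_congr rfl fun v _ => ?_
          rw [hfib v]
          exact ih (i + 1) (by omega) (Function.update x im v)
      _ = ∑ v : X, (f im v (fun k => x ⟨k, k.isLt.trans im.isLt⟩)) *
            ∏ j ∈ univ.filter (fun j : Fin n => (j:ℕ) < i),
              f j (x j) (fun k => x ⟨k, k.isLt.trans j.isLt⟩) := by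
          refine Finset.sum_congr rfl fun v _ => ?_
          have hsplit : univ.filter (fun j : Fin n => (j:ℕ) < i + 1)
              = insert im (univ.filter (fun j : Fin n => (j:ℕ) < i)) := by
            ext j
            simp only [mem_filter, mem_univ, true_and, mem_insert, Fin.ext_iff, him]
            omega
          have hnm : im ∉ univ.filter (fun j : Fin n => (j:ℕ) < i) := by
            simp [him]
          rw [hsplit, Finset.prod_insert hnm]
          congr 1
          · rw [Function.update_self]
            congr 1
            funext k
            have hne : (⟨(k:ℕ), k.isLt.trans im.isLt⟩ : Fin n) ≠ im := by
              have hk : (k:ℕ) < i := by simpa [him] using k.isLt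
              simp only [him, ne_eq, Fin.mk.injEq]
              omega
            rw [Function.update_of_ne hne]
          · refine Finset.prod_congr rfl fun j hj => ?_
            simp only [mem_filter, mem_univ, true_and] at hj
            have hne : j ≠ im := fun hh => by simp [hh, him] at hj
            rw [Function.update_of_ne hne]
            congr 1
            funext k
            have hne2 : (⟨(k:ℕ), k.isLt.trans j.isLt⟩ : Fin n) ≠ im := by
              have hk := k.isLt
              simp only [him, ne_eq, Fin.mk.injEq]
              omega
            rw [Function.update_of_ne hne2]
      _ = _ := by
          rw [← Finset.sum_mul, hf im _, one_mul]

def Zof {X Y S : Type*} [Fintype X] {M n : ℕ} (C : ClassicalCa X S Y M n) :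
    (Fin n → X) → Fin M → Fin M → (Fin n → S) → (Fin n → Y) → ℝ :=
  fun x wh w s y => ∑ q ∈ @Finset.univ C.Q C.fq, C.PQ q *
    (∏ j, C.E j (x j) (fun k => x ⟨k, k.isLt.trans j.isLt⟩) w (prefixS s j) q) *
    C.D wh y q

section Main
variable {X Y S : Type*} [Fintype X] [Fintype Y] [Fintype S] {M n : ℕ}
  (C : ClassicalCa X S Y M n)

/-- The overall encoding probability. -/
def Aenc (w : Fin M) (s : Fin n → S) (q : C.Q) (x : Fin n → X) : ℝ :=
  ∏ j, C.E j (x j) (fun k => x ⟨k, k.isLt.trans j.isLt⟩) w (prefixS s j) q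

lemma Aenc_partial (w : Fin M) (s : Fin n → S) (q : C.Q) (i : ℕ) (hi : i ≤ n)
    (x : Fin n → X) :
    ∑ x' ∈ univ.filter (fun x' : Fin n → X => ∀ j : Fin n, (j:ℕ) < i → x' j = x j),
      Aenc C w s q x'
    = ∏ j ∈ univ.filter (fun j : Fin n => (j:ℕ) < i),
        C.E j (x j) (fun k => x ⟨k, k.isLt.trans j.isLt⟩) w (prefixS s j) q :=
  seq_sum (fun j v h => C.E j v h w (prefixS s j) q)
    (fun j h => C.E_sum j h w (prefixS s j) q) (n - i) i (by omega) x

lemma Aenc_total [Nonempty X] (w : Fin M) (s : Fin n → S) (q : C.Q) :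
    ∑ x : Fin n → X, Aenc C w s q x = 1 := by
  have h := Aenc_partial C w s q 0 (Nat.zero_le n) (fun _ => Classical.arbitrary X)
  have h1 : (univ.filter (fun x' : Fin n → X =>
      ∀ j : Fin n, (j:ℕ) < 0 → x' j = (fun _ => Classical.arbitrary X) j)) = univ :=
    filter_true_of_mem (fun _ _ => fun j hj => absurd hj (by omega))
  have h2 : (univ.filter (fun j : Fin n => (j:ℕ) < 0)) = ∅ := by
    ext j; simp
  rw [h1, h2, Finset.prod_empty] at h
  exact h

lemma Zof_isNSCa [Nonempty X] : IsNSCa M n (Zof C) := by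
  letI : Fintype C.Q := C.fq
  have hZrw : ∀ x wh w s y, Zof C x wh w s y = ∑ q, C.PQ q * Aenc C w s q x * C.D wh y q := by
    intro x wh w s y; rfl
  refine ⟨?_, ?_, ?_, ?_, ?_⟩
  · -- nonnegativity
    intro x wh w s y
    rw [hZrw]
    refine Finset.sum_nonneg fun q _ => ?_
    exact mul_nonneg (mul_nonneg (C.PQ_nonneg q)
      (Finset.prod_nonneg fun j _ => C.E_nonneg _ _ _ _ _ _)) (C.D_nonneg _ _ _)
  · -- normalization
    intro w s y
    calc ∑ x, ∑ wh, Zof C x wh w s y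
        = ∑ x : Fin n → X, ∑ q, C.PQ q * Aenc C w s q x := by
          refine Finset.sum_congr rfl fun x _ => ?_
          simp only [hZrw]
          rw [Finset.sum_comm]
          refine Finset.sum_congr rfl fun q _ => ?_
          rw [← Finset.mul_sum, C.D_sum, mul_one]
      _ = ∑ q, C.PQ q * ∑ x : Fin n → X, Aenc C w s q x := by
          rw [Finset.sum_comm]
          exact Finset.sum_congr rfl fun q _ => (Finset.mul_sum _ _ _).symm
      _ = 1 := by
          simp only [Aenc_total]
          simpa using C.PQ_sum
  · -- C1
    intro x w s y y'
    have key : ∀ y'' : Fin n → Y, ∑ wh, Zof C x wh w s y'' = ∑ q, C.PQ q * Aenc C w s q x := by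
      intro y''
      simp only [hZrw]
      rw [Finset.sum_comm]
      refine Finset.sum_congr rfl fun q _ => ?_
      rw [← Finset.mul_sum, C.D_sum, mul_one]
    rw [key, key]
  · -- C2
    intro wh w w' s s' y
    have key : ∀ (w : Fin M) (s : Fin n → S), ∑ x, Zof C x wh w s y = ∑ q, C.PQ q * C.D wh y q := by
      intro w s
      simp only [hZrw]
      rw [Finset.sum_comm]
      refine Finset.sum_congr rfl fun q _ => ?_
      have : ∀ x : Fin n → X, C.PQ q * Aenc C w s q x * C.D wh y q
          = Aenc C w s q x * (C.PQ q * C.D wh y q) := fun x => by ring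
      simp only [this]
      rw [← Finset.sum_mul, Aenc_total, one_mul]
    rw [key, key]
  · -- C3
    intro i h1i hin x wh w s s' y hs
    have key : ∀ t : Fin n → S, (∀ j : Fin n, (j:ℕ) < i → t j = s j) →
        ∑ x' ∈ univ.filter (fun x' : Fin n → X => ∀ j : Fin n, (j:ℕ) < i → x' j = x j),
          Zof C x' wh w t y
        = ∑ q, C.PQ q * (∏ j ∈ univ.filter (fun j : Fin n => (j:ℕ) < i),
            C.E j (x j) (fun k => x ⟨k, k.isLt.trans j.isLt⟩) w (prefixS s j) q) *
            C.D wh y q := by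
      intro t ht
      simp only [hZrw]
      rw [Finset.sum_comm]
      refine Finset.sum_congr rfl fun q _ => ?_
      have : ∀ x' : Fin n → X, C.PQ q * Aenc C w t q x' * C.D wh y q
          = Aenc C w t q x' * (C.PQ q * C.D wh y q) := fun x' => by ring
      simp only [this]
      rw [← Finset.sum_mul, Aenc_partial C w t q i (le_of_lt hin) x]
      have hpre : ∀ j ∈ univ.filter (fun j : Fin n => (j:ℕ) < i),
          prefixS t j = prefixS s j := by
        intro j hj
        simp only [mem_filter, mem_univ, true_and] at hj
        funext k
        exact ht ⟨(k:ℕ), Nat.lt_of_le_of_lt (Nat.le_of_lt_succ k.isLt) j.isLt⟩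
          (by simpa using Nat.lt_of_le_of_lt (Nat.le_of_lt_succ k.isLt) hj)
      rw [Finset.prod_congr rfl (fun j hj => by rw [hpre j hj])]
      ring
    rw [key s (fun _ _ => rfl), key s' (fun j hj => (hs j hj).symm)]

end Main

section Eta
variable {X Y S : Type*} [Fintype X] [Fintype Y] [Fintype S] {M n : ℕ}

lemma etaNS_Zof (N : Y → X → S → ℝ) (P : S → ℝ) (C : ClassicalCa X S Y M n) :
    etaNS N P M n (Zof C) = etaC N P M n C := by
  letI : Fintype C.Q := C.fq
  unfold etaNS etaC
  congr 1
  refine Finset.sum_congr rfl fun w _ => ?_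
  calc ∑ x, ∑ s, ∑ y, prodP P s * prodN N y x s * Zof C x w w s y
      = ∑ x : Fin n → X, ∑ s : Fin n → S, ∑ y : Fin n → Y, ∑ q : C.Q,
          C.PQ q * (prodP P s * Aenc C w s q x * prodN N y x s * C.D w y q) := by
        refine Finset.sum_congr rfl fun x _ => Finset.sum_congr rfl fun s _ =>
          Finset.sum_congr rfl fun y _ => ?_
        show prodP P s * prodN N y x s * (∑ q : C.Q, C.PQ q * Aenc C w s q x * C.D w y q) = _
        rw [Finset.mul_sum]
        exact Finset.sum_congr rfl fun q _ => by ring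
    _ = ∑ x : Fin n → X, ∑ s : Fin n → S, ∑ q : C.Q, ∑ y : Fin n → Y,
          C.PQ q * (prodP P s * Aenc C w s q x * prodN N y x s * C.D w y q) :=
        Finset.sum_congr rfl fun x _ => Finset.sum_congr rfl fun s _ => Finset.sum_comm
    _ = ∑ x : Fin n → X, ∑ q : C.Q, ∑ s : Fin n → S, ∑ y : Fin n → Y,
          C.PQ q * (prodP P s * Aenc C w s q x * prodN N y x s * C.D w y q) :=
        Finset.sum_congr rfl fun x _ => Finset.sum_comm
    _ = ∑ q : C.Q, ∑ x : Fin n → X, ∑ s : Fin n → S, ∑ y : Fin n → Y,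
          C.PQ q * (prodP P s * Aenc C w s q x * prodN N y x s * C.D w y q) :=
        Finset.sum_comm
    _ = ∑ q : C.Q, C.PQ q * ∑ x : Fin n → X, ∑ s : Fin n → S, ∑ y : Fin n → Y,
          prodP P s * Aenc C w s q x * prodN N y x s * C.D w y q := by
        refine Finset.sum_congr rfl fun q _ => ?_
        simp only [Finset.mul_sum]

lemma etaNS_le_bound (N : Y → X → S → ℝ) (P : S → ℝ) (hN : IsChannel N) (hP : IsPMF P)
    (Z : (Fin n → X) → Fin M → Fin M → (Fin n → S) → (Fin n → Y) → ℝ)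
    (hZ : IsNSCa M n Z) :
    etaNS N P M n Z ≤ (1 / (M : ℝ)) * ∑ _w : Fin M, ∑ _x : Fin n → X,
      ∑ _s : Fin n → S, ∑ _y : Fin n → Y, (1 : ℝ) := by
  unfold etaNS
  refine mul_le_mul_of_nonneg_left ?_ (by positivity)
  refine Finset.sum_le_sum fun w _ => Finset.sum_le_sum fun x _ =>
    Finset.sum_le_sum fun s _ => Finset.sum_le_sum fun y _ => ?_
  have hP1 : ∀ t : S, P t ≤ 1 := fun t =>
    hP.2 ▸ Finset.single_le_sum (fun i _ => hP.1 i) (mem_univ t)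
  have hN1 : ∀ (a : Y) (b : X) (c : S), N a b c ≤ 1 := fun a b c =>
    (hN.2 b c) ▸ Finset.single_le_sum (fun i _ => hN.1 i b c) (mem_univ a)
  have hprodP : prodP P s ≤ 1 := Finset.prod_le_one (fun i _ => hP.1 _) (fun i _ => hP1 _)
  have hprodN0 : 0 ≤ prodN N y x s := Finset.prod_nonneg fun i _ => hN.1 _ _ _
  have hprodN : prodN N y x s ≤ 1 :=
    Finset.prod_le_one (fun i _ => hN.1 _ _ _) (fun i _ => hN1 _ _ _)
  have hZ0 : 0 ≤ Z x w w s y := hZ.1 x w w s y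
  have hZ1 : Z x w w s y ≤ 1 := by
    have h1 : Z x w w s y ≤ ∑ wh, Z x wh w s y :=
      Finset.single_le_sum (fun wh _ => hZ.1 x wh w s y) (mem_univ w)
    have h2 : ∑ wh, Z x wh w s y ≤ ∑ x', ∑ wh, Z x' wh w s y :=
      Finset.single_le_sum (f := fun x' => ∑ wh, Z x' wh w s y)
        (fun x' _ => Finset.sum_nonneg fun wh _ => hZ.1 x' wh w s y) (mem_univ x)
    calc Z x w w s y ≤ _ := h1
      _ ≤ _ := h2
      _ = 1 := hZ.2.1 w s y
  exact mul_le_one₀ (mul_le_one₀ hprodP hprodN0 hprodN) hZ0 hZ1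

end Eta


/-- Every classical causal-CSIT scheme induces an NS-assisted
causal-CSIT scheme with the same success probability; consequently
`η^{NS,ca}_opt ≥ η^{C,ca}_opt`. -/
theorem classical_to_ns_scheme {X Y S : Type*} [Fintype X] [Fintype Y] [Fintype S]
    [Nonempty X] [Nonempty Y] [Nonempty S]
    (N : Y → X → S → ℝ) (P : S → ℝ) (hN : IsChannel N) (hP : IsPMF P)
    (M n : ℕ) (C : ClassicalCa X S Y M n) :
    let Z : (Fin n → X) → Fin M → Fin M → (Fin n → S) → (Fin n → Y) → ℝ :=
      fun x wh w s y => ∑ q ∈ @Finset.univ C.Q C.fq, C.PQ q *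
        (∏ j, C.E j (x j) (fun k => x ⟨k, k.isLt.trans j.isLt⟩) w (prefixS s j) q) *
        C.D wh y q
    IsNSCa M n Z ∧ etaNS N P M n Z = etaC N P M n C ∧
    etaNSOpt N P M n ≥ etaCOpt N P M n := by
  intro Z
  have hZ : Z = Zof C := rfl
  refine ⟨hZ ▸ Zof_isNSCa C, hZ ▸ etaNS_Zof N P C, ?_⟩
  unfold etaNSOpt etaCOpt
  refine csSup_le_csSup ?_ ⟨etaC N P M n C, C, rfl⟩ ?_
  · refine ⟨(1 / (M : ℝ)) * ∑ _w : Fin M, ∑ _x : Fin n → X,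
      ∑ _s : Fin n → S, ∑ _y : Fin n → Y, (1 : ℝ), ?_⟩
    rintro e ⟨Z', hZ', rfl⟩
    exact etaNS_le_bound N P hN hP Z' hZ'
  · rintro e ⟨C', rfl⟩
    exact ⟨Zof C', Zof_isNSCa C', etaNS_Zof N P C'⟩

end
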